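/- Let p_ua, q_ua, p_ub, q_ub, p_uc, q_uc be reals with (p_ua-q_ua)*(p_ub-q_ub) ≠ 0, (p_ua-q_ua)*(p_uc-q_uc) ≠ 0, and (p_ub-q_ub)*(p_uc-q_uc) > 0. With X_ui = (p_ui+q_ui)/2 and Y_uiuj = (p_ui*p_uj + q_ui*q_uj)/2, we have |p_ua - q_ua|/2 = sqrt( ((Y_uaub - X_ua*X_ub)*(Y_uauc - X_ua*X_uc)) / (Y_ubuc - X_ub*X_uc) ). -/

import Mathlib

theorem stmt_3 (p_ua q_ua p_ub q_ub p_uc q_uc : ℝ)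
    (hab : (p_ua - q_ua) * (p_ub - q_ub) ≠ 0)
    (hac : (p_ua - q_ua) * (p_uc - q_uc) ≠ 0)
    (hbc : (p_ub - q_ub) * (p_uc - q_uc) > 0) :
    let X_ua := (p_ua + q_ua) / 2
    let X_ub := (p_ub + q_ub) / 2
    let X_uc := (p_uc + q_uc) / 2
    let Y_uaub := (p_ua * p_ub + q_ua * q_ub) / 2
    let Y_uauc := (p_ua * p_uc + q_ua * q_uc) / 2
    let Y_ubuc := (p_ub * p_uc + q_ub * q_uc) / 2
    |p_ua - q_ua| / 2 =
      Real.sqrt (((Y_uaub - X_ua * X_ub) * (Y_uauc - X_ua * X_uc)) /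
        (Y_ubuc - X_ub * X_uc)) := by
  intro X_ua X_ub X_uc Y_uaub Y_uauc Y_ubuc
  have hne : (p_ub - q_ub) * (p_uc - q_uc) ≠ 0 := ne_of_gt hbc
  have h : ((Y_uaub - X_ua * X_ub) * (Y_uauc - X_ua * X_uc)) /
      (Y_ubuc - X_ub * X_uc) = ((p_ua - q_ua) / 2) ^ 2 := by
    have h2 : Y_ubuc - X_ub * X_uc = (p_ub - q_ub) * (p_uc - q_uc) / 4 := by
      simp only [Y_ubuc, X_ub, X_uc]; ring
    rw [h2]
    simp only [Y_uaub, Y_uauc, X_ua, X_ub, X_uc]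
    have hb : p_ub - q_ub ≠ 0 := right_ne_zero_of_mul hab
    have hc : p_uc - q_uc ≠ 0 := right_ne_zero_of_mul hac
    field_simp
    ring
  rw [h, Real.sqrt_sq_eq_abs, abs_div]
  norm_num
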